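/- An n×n S-box F : (Fin n → ZMod 2) → (Fin n → ZMod 2) is bijective if and only if for every nonzero vector a : Fin n → ZMod 2, the Boolean function x ↦ ∑ i, a i * F x i is balanced, i.e., the number of inputs x : Fin n → ZMod 2 on which it takes the value 1 equals 2^(n-1). -/

import Mathlib

/-- A Boolean function of `n` inputs is balanced if it takes the value 1 on
exactly `2^(n-1)` inputs. -/
def BalancedBF (n : ℕ) (f : (Fin n → ZMod 2) → ZMod 2) : Prop :=
  (Finset.univ.filter (fun x : Fin n → ZMod 2 => f x = 1)).card = 2 ^ (n - 1)

/-- An affine Boolean function of `n` inputs. -/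
def IsAffineBF (n : ℕ) (l : (Fin n → ZMod 2) → ZMod 2) : Prop :=
  ∃ (a : Fin n → ZMod 2) (c : ZMod 2), ∀ x, l x = (∑ i, a i * x i) + c

/-- Hamming distance between two Boolean functions. -/
def hammingDistBF (n : ℕ) (f g : (Fin n → ZMod 2) → ZMod 2) : ℕ :=
  (Finset.univ.filter (fun x : Fin n → ZMod 2 => f x ≠ g x)).card

/-- The nonlinearity of a Boolean function: the minimal Hamming distance to an
affine Boolean function. -/
noncomputable def nonlinearity (n : ℕ) (f : (Fin n → ZMod 2) → ZMod 2) : ℕ :=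
  sInf {d | ∃ l, IsAffineBF n l ∧ d = hammingDistBF n f l}

/-- The standard basis vector `e i`. -/
def stdBasis (n : ℕ) (i : Fin n) : Fin n → ZMod 2 :=
  fun j => if j = i then 1 else 0

/-- The strict avalanche criterion. -/
def SAC (n : ℕ) (f : (Fin n → ZMod 2) → ZMod 2) : Prop :=
  ∀ i : Fin n, BalancedBF n (fun x => f x + f (x + stdBasis n i))

def chiZ : ZMod 2 → ℤ := fun b => if b = 1 then -1 else 1

lemma chiZ_add (b c : ZMod 2) : chiZ (b + c) = chiZ b * chiZ c := by
  revert b c; decide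

lemma chiZ_succ (b : ZMod 2) : chiZ (b + 1) = -chiZ b := by revert b; decide

lemma zmod2_ne_one (b : ZMod 2) (h : b ≠ 1) : b = 0 := by revert h; revert b; decide

lemma card_V (n : ℕ) : Fintype.card (Fin n → ZMod 2) = 2 ^ n := by simp

lemma balanced_iff_sum_chi (n : ℕ) (hn : 0 < n) (f : (Fin n → ZMod 2) → ZMod 2) :
    BalancedBF n f ↔ ∑ x, chiZ (f x) = 0 := by
  classical
  have hsplit := Finset.sum_filter_add_sum_filter_not Finset.univ
    (fun x : Fin n → ZMod 2 => f x = 1) (fun x => chiZ (f x))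
  have e1 : ∀ x ∈ Finset.univ.filter (fun x : Fin n → ZMod 2 => f x = 1),
      chiZ (f x) = -1 := by
    intro x hx
    simp only [Finset.mem_filter] at hx
    simp [chiZ, hx.2]
  have e2 : ∀ x ∈ Finset.univ.filter (fun x : Fin n → ZMod 2 => ¬ f x = 1),
      chiZ (f x) = 1 := by
    intro x hx
    simp only [Finset.mem_filter] at hx
    simp [chiZ, hx.2]
  rw [Finset.sum_congr rfl e1, Finset.sum_congr rfl e2, Finset.sum_const,
    Finset.sum_const] at hsplit
  have hcards := Finset.card_filter_add_card_filter_not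
    (s := (Finset.univ : Finset (Fin n → ZMod 2)))
    (p := fun x : Fin n → ZMod 2 => f x = 1)
  rw [Finset.card_univ, card_V] at hcards
  have hpow : 2 ^ n = 2 * 2 ^ (n - 1) := by
    rw [← pow_succ']
    congr 1
    omega
  rw [hpow] at hcards
  unfold BalancedBF
  simp only [nsmul_eq_mul, mul_neg_one, mul_one] at hsplit
  set c1 := (Finset.univ.filter (fun x : Fin n → ZMod 2 => f x = 1)).card with hc1
  set c2 := (Finset.univ.filter (fun x : Fin n → ZMod 2 => ¬ f x = 1)).card with hc2
  set M := 2 ^ (n - 1) with hM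
  constructor
  · intro h; omega
  · intro h; rw [h] at hsplit; omega

lemma sum_chi_linear {n : ℕ} (a : Fin n → ZMod 2) (ha : a ≠ 0) :
    ∑ x : Fin n → ZMod 2, chiZ (∑ i, a i * x i) = 0 := by
  classical
  obtain ⟨j, hj⟩ : ∃ j, a j = 1 := by
    by_contra h
    push_neg at h
    exact ha (funext fun i => zmod2_ne_one _ (h i))
  have key : ∀ x : Fin n → ZMod 2,
      (∑ i, a i * (x + stdBasis n j) i) = (∑ i, a i * x i) + 1 := by
    intro x
    have h1 : ∀ i, a i * (x + stdBasis n j) i = a i * x i + a i * stdBasis n j i := by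
      intro i; simp [Pi.add_apply, mul_add]
    rw [Finset.sum_congr rfl (fun i _ => h1 i), Finset.sum_add_distrib]
    congr 1
    have h2 : ∀ i, a i * stdBasis n j i = if i = j then a i else 0 := by
      intro i
      by_cases h : i = j
      · simp [stdBasis, h]
      · simp [stdBasis, h]
    rw [Finset.sum_congr rfl (fun i _ => h2 i), Finset.sum_ite_eq' Finset.univ j a]
    simp [hj]
  have hsum : ∑ x : Fin n → ZMod 2, chiZ (∑ i, a i * x i)
      = -∑ x : Fin n → ZMod 2, chiZ (∑ i, a i * x i) := by
    conv_lhs => rw [← Equiv.sum_comp (Equiv.addRight (stdBasis n j))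
      (fun x => chiZ (∑ i, a i * x i))]
    simp only [Equiv.coe_addRight]
    rw [Finset.sum_congr rfl (fun x _ => by rw [key x, chiZ_succ])]
    exact Finset.sum_neg_distrib _
  linarith

lemma orthogonality {n : ℕ} (z : Fin n → ZMod 2) :
    ∑ a : Fin n → ZMod 2, chiZ (∑ i, a i * z i) = if z = 0 then (2 : ℤ) ^ n else 0 := by
  classical
  by_cases hz : z = 0
  · subst hz
    simp [chiZ, card_V]
  · rw [if_neg hz]
    have h : ∀ a : Fin n → ZMod 2, (∑ i, a i * z i) = ∑ i, z i * a i :=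
      fun a => Finset.sum_congr rfl (fun i _ => mul_comm _ _)
    rw [Finset.sum_congr rfl (fun a _ => by rw [h a])]
    exact sum_chi_linear z hz

theorem sbox_bijective_iff_balanced_linear_combinations
    (n : ℕ) (hn : 0 < n) (F : (Fin n → ZMod 2) → (Fin n → ZMod 2)) :
    Function.Bijective F ↔
      ∀ a : Fin n → ZMod 2, a ≠ 0 →
        BalancedBF n (fun x => ∑ i, a i * F x i) := by
  classical
  constructor
  · intro hF a ha
    rw [balanced_iff_sum_chi n hn]
    have := Fintype.sum_bijective F hF
      (fun x => chiZ (∑ i, a i * F x i)) (fun y => chiZ (∑ i, a i * y i))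
      (fun x => rfl)
    rw [this]
    exact sum_chi_linear a ha
  · intro H
    have key : ∀ y : Fin n → ZMod 2,
        (Finset.univ.filter (fun x => F x = y)).card = 1 := by
      intro y
      have hT1 : ∑ x : Fin n → ZMod 2, ∑ a : Fin n → ZMod 2,
          chiZ (∑ i, a i * (F x i + y i))
          = (2 : ℤ) ^ n * (Finset.univ.filter (fun x => F x = y)).card := by
        have hin : ∀ x : Fin n → ZMod 2,
            (∑ a : Fin n → ZMod 2, chiZ (∑ i, a i * (F x i + y i)))
            = if F x = y then (2:ℤ)^n else 0 := by
          intro x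
          have horth := orthogonality (F x + y)
          simp only [Pi.add_apply] at horth
          rw [horth]
          congr 1
          simp only [eq_iff_iff]
          constructor
          · intro h
            funext i
            have h0 := congrFun h i
            simp only [Pi.add_apply, Pi.zero_apply] at h0
            have h2 : F x i + y i + y i = 0 + y i := by rw [h0]
            rwa [add_assoc, ← two_mul, (by decide : (2 : ZMod 2) = 0), zero_mul,
              add_zero, zero_add] at h2
          · intro h
            funext i
            have h0 := congrFun h i
            simp only [Pi.add_apply, Pi.zero_apply, h0]
            rw [← two_mul, (by decide : (2 : ZMod 2) = 0), zero_mul]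
        rw [Finset.sum_congr rfl (fun x _ => hin x), ← Finset.sum_filter,
          Finset.sum_const]
        simp [mul_comm]
      have hT2 : ∑ x : Fin n → ZMod 2, ∑ a : Fin n → ZMod 2,
          chiZ (∑ i, a i * (F x i + y i)) = (2 : ℤ) ^ n := by
        rw [Finset.sum_comm]
        have hterm : ∀ a : Fin n → ZMod 2,
            (∑ x : Fin n → ZMod 2, chiZ (∑ i, a i * (F x i + y i)))
            = chiZ (∑ i, a i * y i) * ∑ x : Fin n → ZMod 2, chiZ (∑ i, a i * F x i) := by
          intro a
          rw [Finset.mul_sum]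
          refine Finset.sum_congr rfl (fun x _ => ?_)
          have hsp : (∑ i, a i * (F x i + y i)) = (∑ i, a i * F x i) + ∑ i, a i * y i := by
            rw [← Finset.sum_add_distrib]
            exact Finset.sum_congr rfl (fun i _ => mul_add _ _ _)
          rw [hsp, chiZ_add, mul_comm]
        rw [Finset.sum_congr rfl (fun a _ => hterm a)]
        rw [Finset.sum_eq_single_of_mem 0 (Finset.mem_univ 0)]
        · simp [chiZ, card_V]
        · intro a _ ha
          have hb := H a ha
          rw [balanced_iff_sum_chi n hn] at hb
          rw [hb, mul_zero]
      have heq : (2 : ℤ) ^ n * (Finset.univ.filter (fun x => F x = y)).card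
          = (2 : ℤ) ^ n * 1 := by rw [← hT1, hT2, mul_one]
      have h2n : (2 : ℤ) ^ n ≠ 0 := by positivity
      exact_mod_cast mul_left_cancel₀ h2n heq
    rw [Function.bijective_iff_existsUnique]
    intro y
    obtain ⟨x, hx⟩ := Finset.card_eq_one.mp (key y)
    refine ⟨x, ?_, ?_⟩
    · have hm : x ∈ Finset.univ.filter (fun x => F x = y) :=
        hx ▸ Finset.mem_singleton_self x
      exact (Finset.mem_filter.mp hm).2
    · intro x' hx'
      have hm : x' ∈ Finset.univ.filter (fun x => F x = y) :=
        Finset.mem_filter.mpr ⟨Finset.mem_univ _, hx'⟩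
      rw [hx] at hm
      exact Finset.mem_singleton.mp hm
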